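/- Let Y = Σ_{α ∈ A} y_α Ψ_α(X₁, X₂) be a finite orthonormal polynomial chaos expansion over a set A of multi-indices α = (α₁, α₂) (with Ψ_{(0,0)} = 1), where X₁, X₂ are independent and Ψ_α(x₁,x₂) = Ψ_{α₁}(x₁)Ψ_{α₂}(x₂). Then the first-order Sobol' index of X₁ is S₁ = (Σ_{α: α₁ ≥ 1, α₂ = 0} y_α²) / (Σ_{α ≠ (0,0)} y_α²), i.e., Var(E(Y|X₁)) = Σ_{α₁ ≥ 1, α₂ = 0} y_α². -/

import Mathlib

open MeasureTheory ProbabilityTheory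

private lemma variance_congr_ae' {Ω : Type*} {m : MeasurableSpace Ω} {μ : Measure Ω}
    {f g : Ω → ℝ} (h : f =ᵐ[μ] g) : variance f μ = variance g μ := by
  have hm : μ[f] = μ[g] := integral_congr_ae h
  unfold ProbabilityTheory.variance ProbabilityTheory.evariance
  rw [hm]
  congr 1
  refine lintegral_congr_ae ?_
  filter_upwards [h] with ω hω
  rw [hω]

private lemma chaos_var {Ω : Type*} [MeasurableSpace Ω] (μ : Measure Ω) [IsProbabilityMeasure μ]
    (X₁ X₂ : Ω → ℝ) (hX₁ : Measurable X₁) (hX₂ : Measurable X₂)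
    (hindep : IndepFun X₁ X₂ μ)
    (Ψ : ℕ → ℝ → ℝ) (hΨ0 : Ψ 0 = fun _ => 1)
    (hmeas : ∀ n, Measurable (Ψ n))
    (horth₁ : ∀ n m : ℕ, (∫ ω, Ψ n (X₁ ω) * Ψ m (X₁ ω) ∂μ) = if n = m then 1 else 0)
    (horth₂ : ∀ n m : ℕ, (∫ ω, Ψ n (X₂ ω) * Ψ m (X₂ ω) ∂μ) = if n = m then 1 else 0)
    (hint : ∀ n m k l : ℕ,
      Integrable (fun ω => Ψ n (X₁ ω) * Ψ m (X₂ ω) * (Ψ k (X₁ ω) * Ψ l (X₂ ω))) μ)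
    (A : Finset (ℕ × ℕ)) (z : ℕ × ℕ → ℝ) :
    variance (fun ω => ∑ α ∈ A, z α * (Ψ α.1 (X₁ ω) * Ψ α.2 (X₂ ω))) μ =
      ∑ α ∈ A.filter (fun α => α ≠ (0, 0)), z α ^ 2 := by
  have hint1 : ∀ n k, Integrable (fun ω => Ψ n (X₁ ω) * Ψ k (X₁ ω)) μ := by
    intro n k; simpa [hΨ0] using hint n 0 k 0
  have hint2 : ∀ m l, Integrable (fun ω => Ψ m (X₂ ω) * Ψ l (X₂ ω)) μ := by
    intro m l; simpa [hΨ0] using hint 0 m 0 l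
  have hintm : ∀ n m, Integrable (fun ω => Ψ n (X₁ ω) * Ψ m (X₂ ω)) μ := by
    intro n m; simpa [hΨ0] using hint n m 0 0
  have hI : ∀ n m k l : ℕ, (∫ ω, Ψ n (X₁ ω) * Ψ m (X₂ ω) * (Ψ k (X₁ ω) * Ψ l (X₂ ω)) ∂μ)
      = (if n = k then (1:ℝ) else 0) * (if m = l then 1 else 0) := by
    intro n m k l
    have h := IndepFun.integral_mul_eq_mul_integral (hindep.comp (φ := fun x => Ψ n x * Ψ k x) (ψ := fun x => Ψ m x * Ψ l x)
      ((hmeas n).mul (hmeas k)) ((hmeas m).mul (hmeas l)))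
      (hint1 n k).aestronglyMeasurable (hint2 m l).aestronglyMeasurable
    rw [← horth₁ n k, ← horth₂ m l]
    refine Eq.trans ?_ h
    refine integral_congr_ae (Filter.Eventually.of_forall fun ω => ?_)
    simp only [Pi.mul_apply, Function.comp_apply]
    ring
  have hEm : ∀ n m : ℕ, (∫ ω, Ψ n (X₁ ω) * Ψ m (X₂ ω) ∂μ)
      = (if n = 0 then (1:ℝ) else 0) * (if m = 0 then 1 else 0) := by
    intro n m; simpa [hΨ0] using hI n m 0 0
  set W : Ω → ℝ := fun ω => ∑ α ∈ A, z α * (Ψ α.1 (X₁ ω) * Ψ α.2 (X₂ ω)) with hWdef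
  have hWsq : ∀ ω, W ω * W ω = ∑ α ∈ A, ∑ β ∈ A,
      (z α * z β) * (Ψ α.1 (X₁ ω) * Ψ α.2 (X₂ ω) * (Ψ β.1 (X₁ ω) * Ψ β.2 (X₂ ω))) := by
    intro ω
    rw [hWdef, Finset.sum_mul_sum]
    exact Finset.sum_congr rfl fun α _ => Finset.sum_congr rfl fun β _ => by ring
  have hW2int : Integrable (fun ω => W ω * W ω) μ := by
    rw [show (fun ω => W ω * W ω) = _ from funext hWsq]
    exact integrable_finset_sum _ fun α _ => integrable_finset_sum _ fun β _ =>
      ((hint α.1 α.2 β.1 β.2).const_mul _)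
  have hWmeas : Measurable W := by
    apply Finset.measurable_sum
    intro α _
    exact measurable_const.mul (((hmeas α.1).comp hX₁).mul ((hmeas α.2).comp hX₂))
  have hW2 : MemLp W 2 μ := by
    rw [memLp_two_iff_integrable_sq hWmeas.aestronglyMeasurable]
    simpa [pow_two] using hW2int
  have hEW : (∫ ω, W ω ∂μ) = (if (0,0) ∈ A then z (0,0) else 0) := by
    rw [hWdef]
    rw [integral_finset_sum _ (fun α _ => (hintm α.1 α.2).const_mul (z α))]
    have h1 : ∀ α ∈ A, (∫ ω, z α * (Ψ α.1 (X₁ ω) * Ψ α.2 (X₂ ω)) ∂μ)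
        = if α = (0,0) then z α else 0 := by
      intro α _
      rw [integral_const_mul, hEm]
      rcases α with ⟨n, m⟩
      by_cases hn : n = 0 <;> by_cases hm : m = 0 <;> simp [hn, hm, Prod.ext_iff]
    rw [Finset.sum_congr rfl h1, Finset.sum_ite_eq' A (0,0) z]
  have hEW2 : (∫ ω, W ω * W ω ∂μ) = ∑ α ∈ A, z α ^ 2 := by
    rw [show (fun ω => W ω * W ω) = _ from funext hWsq]
    rw [integral_finset_sum _ (fun α _ => integrable_finset_sum _ fun β _ =>
      ((hint α.1 α.2 β.1 β.2).const_mul _))]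
    refine Finset.sum_congr rfl fun α hα => ?_
    rw [integral_finset_sum _ (fun β _ => ((hint α.1 α.2 β.1 β.2).const_mul _))]
    have h1 : ∀ β ∈ A, (∫ ω, (z α * z β) *
        (Ψ α.1 (X₁ ω) * Ψ α.2 (X₂ ω) * (Ψ β.1 (X₁ ω) * Ψ β.2 (X₂ ω))) ∂μ)
        = if β = α then z α ^ 2 else 0 := by
      intro β _
      rw [integral_const_mul, hI]
      by_cases hb : β = α
      · subst hb; simp [pow_two]
      · have hab : α ≠ β := fun h => hb h.symm
        have hor : α.1 ≠ β.1 ∨ α.2 ≠ β.2 := by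
          by_contra hc
          push_neg at hc
          exact hab (Prod.ext hc.1 hc.2)
        rcases hor with h | h <;> simp [h, hb]
    rw [Finset.sum_congr rfl h1, Finset.sum_ite_eq' A α (fun _ => z α ^ 2), if_pos hα]
  rw [variance_eq_sub hW2]
  have hWpow : (W ^ 2) = fun ω => W ω * W ω := by funext ω; simp [pow_two]
  rw [hWpow, hEW2, hEW]
  have hsplit : ∑ α ∈ A, z α ^ 2 = (∑ α ∈ A.filter (fun α => α ≠ (0,0)), z α ^ 2)
      + (if (0,0) ∈ A then z (0,0) ^ 2 else 0) := by
    rw [← Finset.sum_filter_add_sum_filter_not A (fun α => α ≠ (0,0)) (fun α => z α ^ 2)]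
    congr 1
    rw [Finset.sum_filter]
    simp only [not_not]
    exact Finset.sum_ite_eq' A (0,0) (fun α => z α ^ 2)
  rw [hsplit]
  by_cases h0 : (0,0) ∈ A <;> simp [h0]

/-- First-order Sobol' index of `X₁` from a finite orthonormal bivariate chaos
expansion: `Var(E(Y|X₁)) = Σ_{α₁ ≥ 1, α₂ = 0} y_α²` and
`Var(Y) = Σ_{α ≠ (0,0)} y_α²`, hence `S₁` is the corresponding ratio. -/
theorem sobol_first_order_from_chaos
    {Ω : Type*} [MeasurableSpace Ω] (μ : Measure Ω) [IsProbabilityMeasure μ]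
    (X₁ X₂ : Ω → ℝ) (hX₁ : Measurable X₁) (hX₂ : Measurable X₂)
    (hindep : IndepFun X₁ X₂ μ)
    (Ψ : ℕ → ℝ → ℝ) (hΨ0 : Ψ 0 = fun _ => 1)
    (hmeas : ∀ n, Measurable (Ψ n))
    (horth₁ : ∀ n m : ℕ, (∫ ω, Ψ n (X₁ ω) * Ψ m (X₁ ω) ∂μ) = if n = m then 1 else 0)
    (horth₂ : ∀ n m : ℕ, (∫ ω, Ψ n (X₂ ω) * Ψ m (X₂ ω) ∂μ) = if n = m then 1 else 0)
    (hint : ∀ n m k l : ℕ,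
      Integrable (fun ω => Ψ n (X₁ ω) * Ψ m (X₂ ω) * (Ψ k (X₁ ω) * Ψ l (X₂ ω))) μ)
    (A : Finset (ℕ × ℕ)) (y : ℕ × ℕ → ℝ) (Y : Ω → ℝ)
    (hY : Y = fun ω => ∑ α ∈ A, y α * (Ψ α.1 (X₁ ω) * Ψ α.2 (X₂ ω))) :
    variance (μ[Y | MeasurableSpace.comap X₁ inferInstance]) μ =
        ∑ α ∈ A.filter (fun α => 1 ≤ α.1 ∧ α.2 = 0), (y α) ^ 2 ∧
      variance Y μ = ∑ α ∈ A.filter (fun α => α ≠ (0, 0)), (y α) ^ 2 ∧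
      (variance Y μ ≠ 0 →
        variance (μ[Y | MeasurableSpace.comap X₁ inferInstance]) μ / variance Y μ =
          (∑ α ∈ A.filter (fun α => 1 ≤ α.1 ∧ α.2 = 0), (y α) ^ 2) /
            (∑ α ∈ A.filter (fun α => α ≠ (0, 0)), (y α) ^ 2)) := by
  have hintm : ∀ n m, Integrable (fun ω => Ψ n (X₁ ω) * Ψ m (X₂ ω)) μ := by
    intro n m; simpa [hΨ0] using hint n m 0 0
  have hint2' : ∀ m, Integrable (fun ω => Ψ m (X₂ ω)) μ := by
    intro m; simpa [hΨ0] using hint 0 m 0 0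
  have hE2 : ∀ m : ℕ, (∫ ω, Ψ m (X₂ ω) ∂μ) = if m = 0 then 1 else 0 := by
    intro m; simpa [hΨ0] using horth₂ m 0
  have hm₁ : MeasurableSpace.comap X₁ inferInstance ≤ ‹MeasurableSpace Ω› := hX₁.comap_le
  have hX₁m : Measurable[MeasurableSpace.comap X₁ inferInstance] X₁ :=
    Measurable.of_comap_le le_rfl
  have hX₂m : Measurable[MeasurableSpace.comap X₂ inferInstance] X₂ :=
    Measurable.of_comap_le le_rfl
  set z' : ℕ × ℕ → ℝ := fun α => if α.2 = 0 then y α else 0 with hz'def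
  -- conditional expectation
  have hcond : μ[Y | MeasurableSpace.comap X₁ inferInstance] =ᵐ[μ]
      fun ω => ∑ α ∈ A, z' α * (Ψ α.1 (X₁ ω) * Ψ α.2 (X₂ ω)) := by
    have hYsum : Y = ∑ α ∈ A, (fun ω => y α * (Ψ α.1 (X₁ ω) * Ψ α.2 (X₂ ω))) := by
      rw [hY]; funext ω; rw [Finset.sum_apply]
    have hsum : μ[Y | MeasurableSpace.comap X₁ inferInstance] =ᵐ[μ]
        ∑ α ∈ A, μ[(fun ω => y α * (Ψ α.1 (X₁ ω) * Ψ α.2 (X₂ ω))) | MeasurableSpace.comap X₁ inferInstance] := by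
      rw [hYsum]
      exact condExp_finsetSum (fun α _ => (hintm α.1 α.2).const_mul (y α)) _
    have hterm : ∀ α : ℕ × ℕ,
        μ[(fun ω => y α * (Ψ α.1 (X₁ ω) * Ψ α.2 (X₂ ω))) | MeasurableSpace.comap X₁ inferInstance] =ᵐ[μ]
          fun ω => z' α * (Ψ α.1 (X₁ ω) * Ψ α.2 (X₂ ω)) := by
      intro α
      have h1 : (fun ω => y α * (Ψ α.1 (X₁ ω) * Ψ α.2 (X₂ ω)))
          = y α • ((fun ω => Ψ α.1 (X₁ ω)) * (fun ω => Ψ α.2 (X₂ ω))) := by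
        funext ω; simp
      have hsm : StronglyMeasurable[MeasurableSpace.comap X₁ inferInstance] (fun ω => Ψ α.1 (X₁ ω)) :=
        ((hmeas α.1).comp hX₁m).stronglyMeasurable
      have hmul : μ[(fun ω => Ψ α.1 (X₁ ω)) * (fun ω => Ψ α.2 (X₂ ω)) | MeasurableSpace.comap X₁ inferInstance]
          =ᵐ[μ] (fun ω => Ψ α.1 (X₁ ω)) * μ[(fun ω => Ψ α.2 (X₂ ω)) | MeasurableSpace.comap X₁ inferInstance] :=
        condExp_mul_of_stronglyMeasurable_left hsm (hintm α.1 α.2) (hint2' α.2)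
      have hindep' : Indep (MeasurableSpace.comap X₂ inferInstance) (MeasurableSpace.comap X₁ inferInstance) μ :=
        (IndepFun_iff_Indep X₂ X₁ μ).mp hindep.symm
      have hconst : μ[(fun ω => Ψ α.2 (X₂ ω)) | MeasurableSpace.comap X₁ inferInstance]
          =ᵐ[μ] fun _ => μ[fun ω => Ψ α.2 (X₂ ω)] :=
        condExp_indep_eq hX₂.comap_le hm₁
          ((hmeas α.2).comp hX₂m).stronglyMeasurable hindep'
      have hval : μ[fun ω => Ψ α.2 (X₂ ω)] = if α.2 = 0 then 1 else 0 := hE2 α.2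
      rw [h1]
      refine (condExp_smul (y α) _ _).trans ?_
      refine ((hmul.trans (Filter.EventuallyEq.mul Filter.EventuallyEq.rfl hconst)).const_smul (y α)).trans ?_
      refine Filter.Eventually.of_forall fun ω => ?_
      rcases α with ⟨n, m⟩
      by_cases hm : m = 0 <;> simp [hval, hm, hz'def, hΨ0]
    refine hsum.trans ?_
    have hall : ∀ᵐ ω ∂μ, ∀ α ∈ (A : Set (ℕ × ℕ)),
        (μ[(fun ω => y α * (Ψ α.1 (X₁ ω) * Ψ α.2 (X₂ ω))) | MeasurableSpace.comap X₁ inferInstance]) ω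
          = z' α * (Ψ α.1 (X₁ ω) * Ψ α.2 (X₂ ω)) :=
      (Filter.eventually_all_finite A.finite_toSet).mpr fun α _ => hterm α
    filter_upwards [hall] with ω hω
    rw [Finset.sum_apply]
    exact Finset.sum_congr rfl fun α hα => hω α hα
  have hvar1 : variance (μ[Y | MeasurableSpace.comap X₁ inferInstance]) μ
      = ∑ α ∈ A.filter (fun α => α ≠ (0, 0)), z' α ^ 2 := by
    rw [variance_congr_ae' hcond]
    exact chaos_var μ X₁ X₂ hX₁ hX₂ hindep Ψ hΨ0 hmeas horth₁ horth₂ hint A z'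
  have hvarY : variance Y μ = ∑ α ∈ A.filter (fun α => α ≠ (0, 0)), y α ^ 2 := by
    rw [hY]
    exact chaos_var μ X₁ X₂ hX₁ hX₂ hindep Ψ hΨ0 hmeas horth₁ horth₂ hint A y
  have hsum_eq : ∑ α ∈ A.filter (fun α => α ≠ (0, 0)), z' α ^ 2
      = ∑ α ∈ A.filter (fun α => 1 ≤ α.1 ∧ α.2 = 0), y α ^ 2 := by
    rw [Finset.sum_filter, Finset.sum_filter]
    refine Finset.sum_congr rfl fun α _ => ?_
    rcases α with ⟨n, m⟩
    by_cases hm : m = 0 <;> by_cases hn : n = 0 <;>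
      simp [hz'def, hm, hn, Prod.ext_iff, Nat.one_le_iff_ne_zero]
  have h1 : variance (μ[Y | MeasurableSpace.comap X₁ inferInstance]) μ
      = ∑ α ∈ A.filter (fun α => 1 ≤ α.1 ∧ α.2 = 0), y α ^ 2 := by
    rw [hvar1, hsum_eq]
  exact ⟨h1, hvarY, fun _ => by rw [h1, hvarY]⟩
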